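/- arXiv:2406.00357 — 6 statements merged into one kernel-verified Lean document; each statement's English description precedes it below -/
import Mathlib

section
/- Let G be a simple graph with a proper 3-coloring c, let a and b be two distinct colors, let r₀ be a vertex with c(r₀) = a, and let Y be a set of vertices none of which receives color b under c. Let t' be any vertex and let W = N_Y(N_{N(r₀)}(t')), i.e., the set of neighbors in Y of those neighbors of t' that lie in N(r₀). If c takes at least two distinct values on W, then c(t') ≠ b. -/
lemma fin3aux : ∀ a b p q : Fin 3, a ≠ b → p ≠ a → p ≠ b → q ≠ b → q ≠ p → q = a := by decide

/-- Let `G` be a simple graph with a proper 3-coloring `c`, let `a` and `b`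
be two distinct colors, let `r₀` be a vertex with `c r₀ = a`, and let `Y` be a set of vertices
none of which receives color `b`. Let `t'` be any vertex and let
`W = N_Y(N_{N(r₀)}(t'))`, the set of neighbors in `Y` of those neighbors of `t'` that lie in
`N(r₀)`. If `c` takes at least two distinct values on `W`, then `c t' ≠ b`. -/
theorem stmt1 {V : Type*} [Fintype V] [DecidableEq V]
    (G : SimpleGraph V) [DecidableRel G.Adj]
    (c : V → Fin 3) (hc : ∀ u v : V, G.Adj u v → c u ≠ c v)
    (a b : Fin 3) (hab : a ≠ b)
    (r₀ : V) (hr₀ : c r₀ = a)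
    (Y : Finset V) (hY : ∀ y ∈ Y, c y ≠ b)
    (t' : V)
    (hmulti : ∃ u ∈ Y.filter (fun y => ∃ x : V, G.Adj r₀ x ∧ G.Adj t' x ∧ G.Adj x y),
              ∃ v ∈ Y.filter (fun y => ∃ x : V, G.Adj r₀ x ∧ G.Adj t' x ∧ G.Adj x y),
              c u ≠ c v) :
    c t' ≠ b := by
  intro ht
  obtain ⟨u, hu, v, hv, huv⟩ := hmulti
  have key : ∀ y ∈ Y.filter (fun y => ∃ x : V, G.Adj r₀ x ∧ G.Adj t' x ∧ G.Adj x y),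
      c y = a := by
    intro y hy
    simp only [Finset.mem_filter] at hy
    obtain ⟨hyY, x, hrx, htx, hxy⟩ := hy
    have hxa : c x ≠ a := by rw [← hr₀]; exact fun h => hc r₀ x hrx h.symm
    have hxb : c x ≠ b := by rw [← ht]; exact fun h => hc t' x htx h.symm
    exact fin3aux a b (c x) (c y) hab hxa hxb (hY y hyY) (fun h => hc x y hxy h.symm)
  exact huv ((key u hu).trans (key v hv).symm)
end

section
/- Let G be a simple graph on a finite vertex set V with |V| = n ≥ 4, and let S and T be disjoint nonempty subsets of V such that every vertex of T has at least one neighbor in S. Then there exist nonempty subsets S' ⊆ S and T' ⊆ T and positive reals Δ' and δ' such that: (i) Δ' ≥ ((1/|S|) ∑_{s∈S} d_T(s)) / (30 log₂ n); (ii) δ' ≥ ((1/|T|) ∑_{t∈T} d_S(t)) / 8; (iii) every s ∈ S' satisfies d_{T'}(s) ≥ Δ'; and (iv) every t ∈ T' satisfies δ' ≤ d_{S'}(t) ≤ 5δ'. -/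
open Finset

section Aux

set_option linter.unusedSectionVars false

variable {V : Type*} [Fintype V] [DecidableEq V] (G : SimpleGraph V) [DecidableRel G.Adj]

/-- Edge count between `S` and `T`, counted from the `T` side. -/
private def eST (S T : Finset V) : ℕ := ∑ t ∈ T, (S.filter (fun s => G.Adj t s)).card

private lemma eST_symm (S T : Finset V) :
    eST G S T = ∑ s ∈ S, (T.filter (fun t => G.Adj s t)).card := by
  unfold eST
  simp_rw [Finset.card_filter]
  rw [Finset.sum_comm]
  refine Finset.sum_congr rfl fun s _ => Finset.sum_congr rfl fun t _ => ?_
  simp only [G.adj_comm t s]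

private lemma eST_erase_right {t : V} {T : Finset V} (S : Finset V) (ht : t ∈ T) :
    eST G S (T.erase t) + (S.filter (fun s => G.Adj t s)).card = eST G S T :=
  Finset.sum_erase_add _ _ ht

private lemma eST_erase_left {s : V} {S : Finset V} (T : Finset V) (hs : s ∈ S) :
    eST G (S.erase s) T + (T.filter (fun t => G.Adj s t)).card = eST G S T := by
  rw [eST_symm, eST_symm]
  exact Finset.sum_erase_add _ _ hs

/-- Iterative deletion of low-degree vertices on both sides. -/
private lemma trim (a b : ℝ) (ha : 0 ≤ a) (hb : 0 ≤ b) :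
    ∀ (k : ℕ) (S T : Finset V), S.card + T.card = k →
    ∃ S' T', S' ⊆ S ∧ T' ⊆ T ∧
      (eST G S T : ℝ) - S.card * a - T.card * b ≤ (eST G S' T' : ℝ) ∧
      (∀ s ∈ S', a ≤ ((T'.filter (fun t => G.Adj s t)).card : ℝ)) ∧
      (∀ t ∈ T', b ≤ ((S'.filter (fun s => G.Adj t s)).card : ℝ)) := by
  intro k
  induction k using Nat.strong_induction_on with
  | _ k IH =>
    intro S T hk
    by_cases hs : ∃ s ∈ S, ((T.filter (fun t => G.Adj s t)).card : ℝ) < a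
    · obtain ⟨s, hsS, hsd⟩ := hs
      have hcard : (S.erase s).card + T.card < k := by
        rw [← hk, Finset.card_erase_of_mem hsS]
        have : 0 < S.card := Finset.card_pos.mpr ⟨s, hsS⟩
        omega
      obtain ⟨S', T', hS', hT', hE, hA, hB⟩ :=
        IH _ hcard (S.erase s) T rfl
      refine ⟨S', T', hS'.trans (Finset.erase_subset _ _), hT', ?_, hA, hB⟩
      refine le_trans ?_ hE
      have heq := eST_erase_left G T hsS
      have hc : (S.card : ℝ) = (S.erase s).card + 1 := by
        rw [Finset.card_erase_of_mem hsS]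
        have : 0 < S.card := Finset.card_pos.mpr ⟨s, hsS⟩
        rw [Nat.cast_sub this]
        ring
      have : (eST G S T : ℝ) = eST G (S.erase s) T + (T.filter (fun t => G.Adj s t)).card := by
        rw [← heq]; push_cast; ring
      rw [this, hc]
      nlinarith [hsd]
    · by_cases ht : ∃ t ∈ T, ((S.filter (fun s => G.Adj t s)).card : ℝ) < b
      · obtain ⟨t, htT, htd⟩ := ht
        have hcard : S.card + (T.erase t).card < k := by
          rw [← hk, Finset.card_erase_of_mem htT]
          have : 0 < T.card := Finset.card_pos.mpr ⟨t, htT⟩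
          omega
        obtain ⟨S', T', hS', hT', hE, hA, hB⟩ :=
          IH _ hcard S (T.erase t) rfl
        refine ⟨S', T', hS', hT'.trans (Finset.erase_subset _ _), ?_, hA, hB⟩
        refine le_trans ?_ hE
        have heq := eST_erase_right G S htT
        have hc : (T.card : ℝ) = (T.erase t).card + 1 := by
          rw [Finset.card_erase_of_mem htT]
          have : 0 < T.card := Finset.card_pos.mpr ⟨t, htT⟩
          rw [Nat.cast_sub this]
          ring
        have : (eST G S T : ℝ) = eST G S (T.erase t) + (S.filter (fun s => G.Adj t s)).card := by
          rw [← heq]; push_cast; ring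
        rw [this, hc]
        nlinarith [htd]
      · push_neg at hs ht
        refine ⟨S, T, subset_rfl, subset_rfl, ?_, hs, ht⟩
        have h1 : 0 ≤ (S.card : ℝ) * a := by positivity
        have h2 : 0 ≤ (T.card : ℝ) * b := by positivity
        linarith

end Aux

set_option maxHeartbeats 1000000 in
/-- regularization. Let `G` be a simple graph on a finite vertex set `V` with
`|V| = n ≥ 4`, and let `S` and `T` be disjoint nonempty subsets of `V` such that every vertex
of `T` has at least one neighbor in `S`. Then there exist nonempty subsets `S' ⊆ S` and
`T' ⊆ T` and positive reals `Δ'` and `δ'` such that: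
(i) `Δ' ≥ ((1/|S|) ∑_{s∈S} d_T(s)) / (30 log₂ n)`;
(ii) `δ' ≥ ((1/|T|) ∑_{t∈T} d_S(t)) / 8`;
(iii) every `s ∈ S'` satisfies `d_{T'}(s) ≥ Δ'`; and
(iv) every `t ∈ T'` satisfies `δ' ≤ d_{S'}(t) ≤ 5δ'`. -/
theorem stmt4 {V : Type*} [Fintype V] [DecidableEq V]
    (G : SimpleGraph V) [DecidableRel G.Adj]
    (hn : 4 ≤ Fintype.card V)
    (S T : Finset V) (hdisj : Disjoint S T) (hS : S.Nonempty) (hT : T.Nonempty)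
    (hTS : ∀ t ∈ T, ∃ s ∈ S, G.Adj t s) :
    ∃ (S' T' : Finset V) (Δ' δ' : ℝ),
      S' ⊆ S ∧ T' ⊆ T ∧ S'.Nonempty ∧ T'.Nonempty ∧ 0 < Δ' ∧ 0 < δ' ∧
      Δ' ≥ ((∑ s ∈ S, ((T.filter (fun t => G.Adj s t)).card : ℝ)) / S.card) /
            (30 * Real.logb 2 (Fintype.card V)) ∧
      δ' ≥ ((∑ t ∈ T, ((S.filter (fun s => G.Adj t s)).card : ℝ)) / T.card) / 8 ∧
      (∀ s ∈ S', Δ' ≤ ((T'.filter (fun t => G.Adj s t)).card : ℝ)) ∧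
      (∀ t ∈ T', δ' ≤ ((S'.filter (fun s => G.Adj t s)).card : ℝ) ∧
                 ((S'.filter (fun s => G.Adj t s)).card : ℝ) ≤ 5 * δ') := by
  classical
  set n := Fintype.card V with hn_def
  set f : V → ℕ := fun t => (S.filter (fun s => G.Adj t s)).card with hf
  have hT1 : ∀ t ∈ T, 1 ≤ f t := by
    intro t ht
    obtain ⟨s, hsS, hadj⟩ := hTS t ht
    exact Finset.card_pos.mpr ⟨s, Finset.mem_filter.mpr ⟨hsS, hadj⟩⟩
  have he0T : T.card ≤ eST G S T := by
    have := Finset.card_nsmul_le_sum T f 1 hT1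
    simpa [eST] using this
  have hTpos : 0 < T.card := Finset.card_pos.mpr hT
  have hSpos : 0 < S.card := Finset.card_pos.mpr hS
  have he0pos : 0 < eST G S T := lt_of_lt_of_le hTpos he0T
  -- T₀ : vertices of T of at least half-average degree into S
  set T₀ : Finset V := T.filter (fun t => (eST G S T : ℝ) ≤ 2 * T.card * f t) with hT₀
  have hT₀sub : T₀ ⊆ T := Finset.filter_subset _ _
  have hhalf : (eST G S T : ℝ) ≤ 2 * (eST G S T₀ : ℝ) := by
    have hsplit : eST G S T₀ + ∑ t ∈ T.filter (fun t => ¬ ((eST G S T : ℝ) ≤ 2 * T.card * f t)), f t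
        = eST G S T := by
      simp only [eST, hT₀]
      exact Finset.sum_filter_add_sum_filter_not _ _ _
    have hbad : (∑ t ∈ T.filter (fun t => ¬ ((eST G S T : ℝ) ≤ 2 * T.card * f t)), (f t : ℝ))
        ≤ (eST G S T : ℝ) / 2 := by
      have h1 : ∀ t ∈ T.filter (fun t => ¬ ((eST G S T : ℝ) ≤ 2 * T.card * f t)),
          (f t : ℝ) ≤ (eST G S T : ℝ) / (2 * T.card) := by
        intro t ht
        have := (Finset.mem_filter.mp ht).2
        push_neg at this
        have hTc : (0:ℝ) < 2 * T.card := by positivity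
        rw [le_div_iff₀ hTc]
        nlinarith [this]
      calc (∑ t ∈ T.filter (fun t => ¬ ((eST G S T : ℝ) ≤ 2 * T.card * f t)), (f t : ℝ))
          ≤ (T.filter (fun t => ¬ ((eST G S T : ℝ) ≤ 2 * T.card * f t))).card •
              ((eST G S T : ℝ) / (2 * T.card)) := Finset.sum_le_card_nsmul _ _ _ h1
        _ ≤ T.card * ((eST G S T : ℝ) / (2 * T.card)) := by
            rw [nsmul_eq_mul]
            apply mul_le_mul_of_nonneg_right
            · exact_mod_cast Finset.card_le_card (Finset.filter_subset _ _)
            · positivity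
        _ = (eST G S T : ℝ) / 2 := by
            have hTc0 : (T.card : ℝ) ≠ 0 := by positivity
            rw [mul_div_assoc', mul_comm (2:ℝ) (T.card:ℝ), mul_div_mul_left _ _ hTc0]
    have hcast : (eST G S T₀ : ℝ) + (∑ t ∈ T.filter (fun t => ¬ ((eST G S T : ℝ) ≤ 2 * T.card * f t)), (f t : ℝ))
        = (eST G S T : ℝ) := by
      exact_mod_cast hsplit
    linarith
  -- dyadic classes
  set L : ℕ := Nat.log 2 n with hL
  set c : V → ℕ := fun t => Nat.log 2 (f t) with hc
  have hmaps : ∀ t ∈ T₀, c t ∈ Finset.range (L + 1) := by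
    intro t ht
    rw [Finset.mem_range, Nat.lt_succ_iff]
    apply Nat.log_mono_right
    calc f t ≤ S.card := Finset.card_filter_le _ _
      _ ≤ n := by rw [hn_def]; simpa using Finset.card_le_univ S
  have hfib : ∑ j ∈ Finset.range (L + 1), eST G S (T₀.filter (fun t => c t = j)) = eST G S T₀ := by
    simp only [eST]
    exact Finset.sum_fiberwise_of_maps_to hmaps _
  obtain ⟨j, hjmem, hjmax⟩ := Finset.exists_max_image (Finset.range (L + 1))
    (fun j => eST G S (T₀.filter (fun t => c t = j))) ⟨0, Finset.mem_range.mpr (Nat.succ_pos _)⟩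
  set T'' : Finset V := T₀.filter (fun t => c t = j) with hT''
  set E'' : ℕ := eST G S T'' with hE''
  have hpigeon : eST G S T₀ ≤ (L + 1) * E'' := by
    rw [← hfib]
    calc ∑ j' ∈ Finset.range (L + 1), eST G S (T₀.filter (fun t => c t = j'))
        ≤ (Finset.range (L + 1)).card • E'' := Finset.sum_le_card_nsmul _ _ _ hjmax
      _ = (L + 1) * E'' := by rw [Finset.card_range, smul_eq_mul]
  have hE''big : (eST G S T : ℝ) ≤ 2 * (L + 1) * E'' := by
    have : (eST G S T₀ : ℝ) ≤ (L + 1) * E'' := by exact_mod_cast hpigeon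
    linarith
  have hE''pos : 0 < E'' := by
    by_contra h
    push_neg at h
    interval_cases E''
    · have h1 : (eST G S T : ℝ) ≤ 0 := by simpa using hE''big
      have h2 : (0:ℝ) < eST G S T := by exact_mod_cast he0pos
      linarith
  have hT''ne : T''.Nonempty := by
    by_contra h
    rw [Finset.not_nonempty_iff_eq_empty] at h
    rw [hE'', h] at hE''pos
    simp [eST] at hE''pos
  have hT''T : T'' ⊆ T := (Finset.filter_subset _ _).trans hT₀sub
  have hdegT'' : ∀ t ∈ T'', 2 ^ j ≤ f t ∧ f t < 2 ^ (j + 1) := by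
    intro t ht
    have htT₀ := (Finset.mem_filter.mp ht).1
    have hcj : c t = j := (Finset.mem_filter.mp ht).2
    have hf1 : f t ≠ 0 := by
      have := hT1 t (hT₀sub htT₀)
      omega
    constructor
    · rw [← hcj]
      exact Nat.pow_log_le_self 2 hf1
    · rw [← hcj]
      exact Nat.lt_pow_succ_log_self (by norm_num) _
  -- the two thresholds
  set δ' : ℝ := (2:ℝ) ^ j / 2 with hδ'
  set Δ' : ℝ := (E'' : ℝ) / (5 * S.card) with hΔ'
  have hδ'pos : 0 < δ' := by positivity
  have hΔ'pos : 0 < Δ' := by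
    have : (0:ℝ) < E'' := by exact_mod_cast hE''pos
    positivity
  have hET'' : (T''.card : ℝ) * (2:ℝ) ^ j ≤ (E'' : ℝ) := by
    have h := Finset.card_nsmul_le_sum T'' f (2 ^ j) (fun t ht => (hdegT'' t ht).1)
    have h2 : T''.card * 2 ^ j ≤ E'' := by rw [hE'']; simpa [eST, mul_comm] using h
    exact_mod_cast h2
  -- apply the trimming procedure
  obtain ⟨S', T', hS'sub, hT'sub, hEfin, hA, hB⟩ :=
    trim G Δ' δ' hΔ'pos.le hδ'pos.le (S.card + T''.card) S T'' rfl
  have hSΔ : (S.card : ℝ) * Δ' = (E'' : ℝ) / 5 := by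
    have hSc0 : (S.card : ℝ) ≠ 0 := by positivity
    rw [hΔ', mul_div_assoc', mul_comm (5:ℝ) (S.card:ℝ), mul_div_mul_left _ _ hSc0]
  have hTδ : (T''.card : ℝ) * δ' ≤ (E'' : ℝ) / 2 := by
    have : (T''.card : ℝ) * δ' = ((T''.card : ℝ) * (2:ℝ) ^ j) / 2 := by rw [hδ']; ring
    rw [this]
    linarith
  have hfinal : (3/10 : ℝ) * E'' ≤ (eST G S' T' : ℝ) := by
    rw [hSΔ] at hEfin
    linarith
  have hE''R : (0:ℝ) < E'' := by exact_mod_cast hE''pos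
  have hfinposR : (0:ℝ) < (eST G S' T' : ℝ) := by linarith
  have hT'ne : T'.Nonempty := by
    by_contra h
    rw [Finset.not_nonempty_iff_eq_empty] at h
    rw [h] at hfinposR
    simp [eST] at hfinposR
  have hS'ne : S'.Nonempty := by
    by_contra h
    rw [Finset.not_nonempty_iff_eq_empty] at h
    rw [h] at hfinposR
    simp [eST] at hfinposR
  -- logarithm facts
  have hlogn : (2:ℝ) ≤ Real.logb 2 n := by
    have h4 : (4:ℝ) ≤ n := by exact_mod_cast hn
    calc (2:ℝ) = Real.logb 2 ((2:ℝ) ^ (2:ℕ)) := by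
          rw [Real.logb_pow, Real.logb_self_eq_one (by norm_num)]; norm_num
      _ ≤ Real.logb 2 n := by
          apply Real.logb_le_logb_of_le (by norm_num) (by positivity)
          norm_num
          linarith
  have hlogL : (L:ℝ) ≤ Real.logb 2 n := by
    have hn0 : n ≠ 0 := by omega
    have h2L : ((2:ℕ) ^ L : ℕ) ≤ n := Nat.pow_log_le_self 2 hn0
    have h2LR : (2:ℝ) ^ L ≤ (n:ℝ) := by exact_mod_cast h2L
    calc (L:ℝ) = Real.logb 2 ((2:ℝ) ^ L) := by
          rw [Real.logb_pow, Real.logb_self_eq_one (by norm_num)]; ring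
      _ ≤ Real.logb 2 n := Real.logb_le_logb_of_le (by norm_num) (by positivity) h2LR
  have hlogpos : (0:ℝ) < Real.logb 2 n := by linarith
  refine ⟨S', T', Δ', δ', hS'sub, hT'sub.trans hT''T, hS'ne, hT'ne, hΔ'pos, hδ'pos, ?_, ?_, hA, ?_⟩
  · -- (i)
    have hsum : (∑ s ∈ S, ((T.filter (fun t => G.Adj s t)).card : ℝ)) = (eST G S T : ℝ) := by
      rw [eST_symm]
      push_cast
      rfl
    rw [ge_iff_le, hsum, div_div, hΔ', div_le_div_iff₀ (by positivity) (by positivity)]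
    have h6 : 2 * ((L:ℝ) + 1) ≤ 6 * Real.logb 2 n := by linarith
    have hmid : (eST G S T : ℝ) ≤ 6 * Real.logb 2 n * E'' := by
      calc (eST G S T : ℝ) ≤ 2 * ((L:ℝ) + 1) * E'' := by push_cast at hE''big ⊢; linarith
        _ ≤ 6 * Real.logb 2 n * E'' := by
            apply mul_le_mul_of_nonneg_right h6 (by positivity)
    have hSR : (0:ℝ) ≤ S.card := by positivity
    nlinarith [mul_le_mul_of_nonneg_right hmid (mul_nonneg (by norm_num : (0:ℝ) ≤ 5) hSR)]
  · -- (ii)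
    have hsum : (∑ t ∈ T, ((S.filter (fun s => G.Adj t s)).card : ℝ)) = (eST G S T : ℝ) := by
      simp only [eST]
      push_cast
      rfl
    obtain ⟨t0, ht0⟩ := hT''ne
    have ht0T₀ := (Finset.mem_filter.mp ht0).1
    have hpred : (eST G S T : ℝ) ≤ 2 * T.card * f t0 := (Finset.mem_filter.mp ht0T₀).2
    have hup : (f t0 : ℝ) < (2:ℝ) ^ (j + 1) := by
      have := (hdegT'' t0 ht0).2
      exact_mod_cast this
    have h4δ : (2:ℝ) ^ (j + 1) = 4 * δ' := by rw [hδ', pow_succ]; ring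
    have he0up : (eST G S T : ℝ) ≤ 8 * T.card * δ' := by
      have hTR : (0:ℝ) < T.card := by exact_mod_cast hTpos
      nlinarith [hpred, hup, h4δ]
    rw [ge_iff_le, hsum, div_div, div_le_iff₀ (by positivity)]
    have hTR : (0:ℝ) < T.card := by exact_mod_cast hTpos
    nlinarith [he0up]
  · -- (iv)
    intro t ht
    refine ⟨hB t ht, ?_⟩
    have htT'' := hT'sub ht
    have h1 : ((S'.filter (fun s => G.Adj t s)).card : ℝ) ≤ (f t : ℝ) := by
      exact_mod_cast Finset.card_le_card (Finset.filter_subset_filter _ hS'sub)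
    have h2 : (f t : ℝ) < (2:ℝ) ^ (j + 1) := by
      exact_mod_cast (hdegT'' t htT'').2
    have h4δ : (2:ℝ) ^ (j + 1) = 4 * δ' := by rw [hδ', pow_succ]; ring
    linarith
end

section
/- Let n ≥ 2 be a natural number, let T be a finite nonempty set, and let f : T → ℕ satisfy 1 ≤ f(t) ≤ n for all t ∈ T. For each natural number ℓ let U_ℓ = {t ∈ T : (4/3)^ℓ ≤ f(t) < (4/3)^{ℓ+1}}. Then there exists ℓ such that (4/3)^ℓ ≥ (∑_{t∈T} f(t)) / (2|T|) and ∑_{t∈U_ℓ} f(t) ≥ (∑_{t∈T} f(t)) / (12 log₂ n). -/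
open Finset

/-- bucketing pigeonhole. Let `n ≥ 2`, let `T` be a finite nonempty set, and
let `f : T → ℕ` satisfy `1 ≤ f t ≤ n` for all `t ∈ T`. For each `ℓ` let
`U_ℓ = {t ∈ T : (4/3)^ℓ ≤ f t < (4/3)^{ℓ+1}}`. Then there exists `ℓ` such that
`(4/3)^ℓ ≥ (∑_{t∈T} f t) / (2|T|)` and `∑_{t∈U_ℓ} f t ≥ (∑_{t∈T} f t) / (12 log₂ n)`. -/
theorem stmt5 {α : Type*} [DecidableEq α] (n : ℕ) (hn : 2 ≤ n)
    (T : Finset α) (hT : T.Nonempty) (f : α → ℕ)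
    (hf : ∀ t ∈ T, 1 ≤ f t ∧ f t ≤ n) :
    ∃ ℓ : ℕ,
      ((4 / 3 : ℝ)) ^ ℓ ≥ (∑ t ∈ T, (f t : ℝ)) / (2 * T.card) ∧
      (∑ t ∈ T.filter
          (fun t => (4 / 3 : ℝ) ^ ℓ ≤ (f t : ℝ) ∧ (f t : ℝ) < (4 / 3 : ℝ) ^ (ℓ + 1)),
          (f t : ℝ))
        ≥ (∑ t ∈ T, (f t : ℝ)) / (12 * Real.logb 2 n) := by
  classical
  have hb1 : (1:ℝ) < 4/3 := by norm_num
  have hb0 : (0:ℝ) < 4/3 := by norm_num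
  set b : ℝ := 4/3 with hbdef
  set S : ℝ := ∑ t ∈ T, (f t : ℝ) with hSdef
  have hS0 : 0 < S := by
    apply Finset.sum_pos _ hT
    intro t ht
    have := (hf t ht).1
    positivity
  have hcard0 : (0:ℝ) < (T.card : ℝ) := by
    exact_mod_cast Finset.card_pos.2 hT
  have hn2 : (2:ℝ) ≤ (n:ℝ) := by exact_mod_cast hn
  have hn0 : (0:ℝ) < (n:ℝ) := by linarith
  have hlogn1 : 1 ≤ Real.logb 2 n := by
    rw [Real.le_logb_iff_rpow_le (by norm_num) hn0]
    simpa using hn2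
  -- number of buckets
  set M : ℕ := ⌊Real.logb b n⌋₊ + 1 with hMdef
  have hlogb_nonneg : 0 ≤ Real.logb b n := Real.logb_nonneg hb1 (by linarith)
  have hMgt : (n:ℝ) < b ^ (M:ℝ) := by
    have h1 : Real.logb b n < (M:ℝ) := by
      have := Nat.lt_floor_add_one (Real.logb b n)
      push_cast [hMdef]; linarith
    calc (n:ℝ) = b ^ Real.logb b n := (Real.rpow_logb hb0 (by norm_num) hn0).symm
      _ < b ^ (M:ℝ) := (Real.rpow_lt_rpow_left_iff hb1).2 h1
  have hM4 : 3 * (M:ℝ) ≤ 12 * Real.logb 2 n := by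
    have h1 : (M:ℝ) ≤ Real.logb b n + 1 := by
      have := Nat.floor_le hlogb_nonneg
      push_cast [hMdef]; linarith
    have h2 : Real.logb b n ≤ 2.5 * Real.logb 2 n := by
      have hlog2 : 0 < Real.log 2 := Real.log_pos (by norm_num)
      have hlogb : 0 < Real.log b := Real.log_pos hb1
      have hlognn : 0 ≤ Real.log n := Real.log_nonneg (by linarith)
      have key : Real.log 2 ≤ 2.5 * Real.log b := by
        have h4 : Real.log 4 ≤ Real.log (b^(5:ℕ)) := by
          apply Real.log_le_log (by norm_num)
          rw [hbdef]; norm_num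
        rw [Real.log_pow] at h4
        have h42 : Real.log 4 = 2 * Real.log 2 := by
          rw [show (4:ℝ) = 2^(2:ℕ) by norm_num, Real.log_pow]; push_cast; ring
        push_cast at h4
        linarith
      have hu0 : 0 ≤ Real.log n / Real.log 2 := div_nonneg hlognn hlog2.le
      have h5 : Real.log n / Real.log 2 * Real.log 2
          ≤ Real.log n / Real.log 2 * (2.5 * Real.log b) :=
        mul_le_mul_of_nonneg_left key hu0
      rw [div_mul_cancel₀ _ hlog2.ne'] at h5
      rw [Real.logb, Real.logb, div_le_iff₀ hlogb]
      have hring : 2.5 * (Real.log n / Real.log 2) * Real.log b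
          = Real.log n / Real.log 2 * (2.5 * Real.log b) := by ring
      linarith
    linarith
  -- the bucket index function
  set κ : α → ℕ := fun t => ⌊Real.logb b (f t)⌋₊ with hκdef
  have hbucket : ∀ t ∈ T, ∀ ℓ : ℕ,
      ((b ^ ℓ ≤ (f t:ℝ) ∧ (f t:ℝ) < b ^ (ℓ+1)) ↔ κ t = ℓ) := by
    intro t ht ℓ
    have hf1 : (1:ℝ) ≤ (f t : ℝ) := by exact_mod_cast (hf t ht).1
    have hfpos : (0:ℝ) < (f t : ℝ) := by linarith
    have hy : 0 ≤ Real.logb b (f t) := Real.logb_nonneg hb1 hf1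
    have e1 : b ^ ℓ ≤ (f t:ℝ) ↔ (ℓ:ℝ) ≤ Real.logb b (f t) := by
      rw [Real.le_logb_iff_rpow_le hb1 hfpos, Real.rpow_natCast]
    have e2 : (f t:ℝ) < b ^ (ℓ+1) ↔ Real.logb b (f t) < ((ℓ:ℝ)+1) := by
      rw [Real.logb_lt_iff_lt_rpow hb1 hfpos]
      rw [show ((ℓ:ℝ)+1) = ((ℓ+1 : ℕ) : ℝ) by push_cast; ring, Real.rpow_natCast]
    rw [e1, e2, hκdef]
    simp only []
    rw [Nat.floor_eq_iff hy]
  have hκrange : ∀ t ∈ T, κ t ∈ Finset.range M := by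
    intro t ht
    have hf1 : (1:ℝ) ≤ (f t : ℝ) := by exact_mod_cast (hf t ht).1
    have hfn : (f t : ℝ) ≤ (n:ℝ) := by exact_mod_cast (hf t ht).2
    have : Real.logb b (f t) ≤ Real.logb b n :=
      Real.logb_le_logb_of_le hb1 (by linarith) hfn
    have h2 : κ t ≤ ⌊Real.logb b n⌋₊ := Nat.floor_le_floor this
    rw [Finset.mem_range, hMdef]
    omega
  have hsum : ∑ ℓ ∈ Finset.range M, ∑ t ∈ T.filter (fun t => κ t = ℓ), (f t:ℝ) = S :=
    Finset.sum_fiberwise_of_maps_to hκrange _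
  have hcardsum : ∑ ℓ ∈ Finset.range M, (T.filter (fun t => κ t = ℓ)).card = T.card :=
    (Finset.card_eq_sum_card_fiberwise hκrange).symm
  -- good and bad buckets
  set P : ℕ → Prop := fun ℓ => S / (2 * T.card) ≤ b ^ ℓ with hPdef
  set G : Finset ℕ := (Finset.range M).filter P with hGdef
  set c : ℝ := 2 * S / (3 * T.card) with hcdef
  -- bad bucket sums are small
  have hbad : ∑ ℓ ∈ (Finset.range M).filter (fun ℓ => ¬ P ℓ),
      (∑ t ∈ T.filter (fun t => κ t = ℓ), (f t:ℝ)) ≤ 2 * S / 3 := by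
    have step1 : ∀ ℓ ∈ (Finset.range M).filter (fun ℓ => ¬ P ℓ),
        (∑ t ∈ T.filter (fun t => κ t = ℓ), (f t:ℝ))
          ≤ ((T.filter (fun t => κ t = ℓ)).card : ℝ) * c := by
      intro ℓ hℓ
      have hℓP : ¬ P ℓ := (Finset.mem_filter.1 hℓ).2
      rw [hPdef, not_le] at hℓP
      have hterm : ∀ t ∈ T.filter (fun t => κ t = ℓ), (f t:ℝ) ≤ c := by
        intro t ht
        obtain ⟨htT, htκ⟩ := Finset.mem_filter.1 ht
        have := ((hbucket t htT ℓ).2 htκ).2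
        have hlt : (f t:ℝ) < b * b ^ ℓ := by
          rw [pow_succ] at this; linarith [this]
        have : b * b ^ ℓ < b * (S / (2 * T.card)) := by
          apply mul_lt_mul_of_pos_left hℓP hb0
        have hc : b * (S / (2 * T.card)) = c := by
          rw [hcdef, hbdef]; field_simp; ring
        exact (hlt.trans (this.trans_le hc.le)).le
      calc (∑ t ∈ T.filter (fun t => κ t = ℓ), (f t:ℝ))
          ≤ ∑ _t ∈ T.filter (fun t => κ t = ℓ), c := Finset.sum_le_sum hterm
        _ = ((T.filter (fun t => κ t = ℓ)).card : ℝ) * c := by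
            rw [Finset.sum_const, nsmul_eq_mul]
    have step2 : ∑ ℓ ∈ (Finset.range M).filter (fun ℓ => ¬ P ℓ),
        ((T.filter (fun t => κ t = ℓ)).card : ℝ) ≤ (T.card : ℝ) := by
      have : ∑ ℓ ∈ (Finset.range M).filter (fun ℓ => ¬ P ℓ),
          ((T.filter (fun t => κ t = ℓ)).card : ℝ)
          ≤ ∑ ℓ ∈ Finset.range M, ((T.filter (fun t => κ t = ℓ)).card : ℝ) := by
        apply Finset.sum_le_sum_of_subset_of_nonneg (Finset.filter_subset _ _)
        intro i _ _; positivity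
      have h2 : ∑ ℓ ∈ Finset.range M, ((T.filter (fun t => κ t = ℓ)).card : ℝ)
          = (T.card : ℝ) := by exact_mod_cast congrArg (Nat.cast (R := ℝ)) hcardsum
      linarith
    have hc0 : 0 ≤ c := by rw [hcdef]; positivity
    calc ∑ ℓ ∈ (Finset.range M).filter (fun ℓ => ¬ P ℓ),
          (∑ t ∈ T.filter (fun t => κ t = ℓ), (f t:ℝ))
        ≤ ∑ ℓ ∈ (Finset.range M).filter (fun ℓ => ¬ P ℓ),
          ((T.filter (fun t => κ t = ℓ)).card : ℝ) * c := Finset.sum_le_sum step1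
      _ = (∑ ℓ ∈ (Finset.range M).filter (fun ℓ => ¬ P ℓ),
          ((T.filter (fun t => κ t = ℓ)).card : ℝ)) * c := by rw [Finset.sum_mul]
      _ ≤ (T.card : ℝ) * c := by
          apply mul_le_mul_of_nonneg_right step2 hc0
      _ = 2 * S / 3 := by rw [hcdef]; field_simp
  -- good buckets carry at least S/3
  have hgood : S / 3 ≤ ∑ ℓ ∈ G, (∑ t ∈ T.filter (fun t => κ t = ℓ), (f t:ℝ)) := by
    have hsplit := Finset.sum_filter_add_sum_filter_not (Finset.range M) P
      (fun ℓ => ∑ t ∈ T.filter (fun t => κ t = ℓ), (f t:ℝ))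
    rw [hsum] at hsplit
    rw [hGdef]
    linarith
  -- pigeonhole over good buckets
  have hMpos : (0:ℝ) < (M:ℝ) := by
    rw [hMdef]; push_cast; positivity
  have hGne : G.Nonempty := by
    rw [Finset.nonempty_iff_ne_empty]
    intro h
    rw [h, Finset.sum_empty] at hgood
    linarith
  obtain ⟨ℓ, hℓG, hℓsum⟩ : ∃ ℓ ∈ G, S / (3 * M) ≤ ∑ t ∈ T.filter (fun t => κ t = ℓ), (f t:ℝ) := by
    by_contra h
    push_neg at h
    have hlt : ∑ ℓ ∈ G, (∑ t ∈ T.filter (fun t => κ t = ℓ), (f t:ℝ))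
        < ∑ _ℓ ∈ G, S / (3 * M) := Finset.sum_lt_sum_of_nonempty hGne h
    rw [Finset.sum_const, nsmul_eq_mul] at hlt
    have hGcard : (G.card : ℝ) ≤ (M:ℝ) := by
      have : G.card ≤ M := le_trans (Finset.card_filter_le _ _) (by rw [Finset.card_range])
      exact_mod_cast this
    have h1 : (G.card : ℝ) * (S / (3 * M)) ≤ (M:ℝ) * (S / (3 * M)) := by
      apply mul_le_mul_of_nonneg_right hGcard
      positivity
    have h2 : (M:ℝ) * (S / (3 * M)) = S / 3 := by field_simp
    linarith
  refine ⟨ℓ, ?_, ?_⟩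
  · exact (Finset.mem_filter.1 hℓG).2
  · have hfilter : T.filter
        (fun t => (4/3:ℝ) ^ ℓ ≤ (f t : ℝ) ∧ (f t : ℝ) < (4/3:ℝ) ^ (ℓ + 1))
        = T.filter (fun t => κ t = ℓ) := by
      apply Finset.filter_congr
      intro t ht
      exact hbucket t ht ℓ
    rw [hfilter]
    have hle : S / (12 * Real.logb 2 n) ≤ S / (3 * M) := by
      apply div_le_div_of_nonneg_left hS0.le (by positivity) (by linarith)
    linarith
end

section
/- Let G be a simple graph, let S and T be disjoint finite vertex sets, let X ⊆ S and Y ⊆ T, and let δ > 0 be a real number. Suppose every y ∈ Y satisfies d_S(y) ≥ δ, and suppose e(X,Y) < δ|Y|/2. Let Y'' = {y ∈ Y : d_{S∖X}(y) ≥ δ/3}. Then e(Y'', S∖X) ≥ δ|Y|/6. -/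
open Finset

lemma card_prod_filter {V : Type*} [DecidableEq V] (A B : Finset V)
    (P : V → V → Prop) [∀ a b, Decidable (P a b)] :
    ((A ×ˢ B).filter (fun p => P p.1 p.2)).card = ∑ a ∈ A, (B.filter (P a)).card := by
  rw [Finset.card_filter, Finset.sum_product]
  exact Finset.sum_congr rfl fun a _ => (Finset.card_filter _ _).symm

/-- Let `G` be a simple graph, let `S` and `T` be disjoint finite vertex sets,
let `X ⊆ S` and `Y ⊆ T`, and let `δ > 0` be real. Suppose every `y ∈ Y` satisfies
`d_S(y) ≥ δ`, and suppose `e(X,Y) < δ|Y|/2`. Let `Y'' = {y ∈ Y : d_{S∖X}(y) ≥ δ/3}`. Then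
`e(Y'', S∖X) ≥ δ|Y|/6`. -/
theorem stmt6 {V : Type*} [Fintype V] [DecidableEq V]
    (G : SimpleGraph V) [DecidableRel G.Adj]
    (S T : Finset V) (hdisj : Disjoint S T)
    (X Y : Finset V) (hX : X ⊆ S) (hY : Y ⊆ T)
    (δ : ℝ) (hδ : 0 < δ)
    (hdeg : ∀ y ∈ Y, δ ≤ ((S.filter (fun s => G.Adj y s)).card : ℝ))
    (hsparse : (((X ×ˢ Y).filter (fun p => G.Adj p.1 p.2)).card : ℝ) < δ * Y.card / 2) :
    δ * Y.card / 6 ≤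
      ((((Y.filter (fun y => δ / 3 ≤ (((S \ X).filter (fun s => G.Adj y s)).card : ℝ)))
            ×ˢ (S \ X)).filter (fun p => G.Adj p.1 p.2)).card : ℝ) := by
  classical
  set Y'' := Y.filter (fun y => δ / 3 ≤ (((S \ X).filter (fun s => G.Adj y s)).card : ℝ))
    with hY''
  have hY''sub : Y'' ⊆ Y := Finset.filter_subset _ _
  -- notation
  set f : V → ℝ := fun y => (((S \ X).filter (fun s => G.Adj y s)).card : ℝ) with hf
  set g : V → ℝ := fun y => ((X.filter (fun s => G.Adj y s)).card : ℝ) with hg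
  -- split degree: d_S = d_{S\X} + d_X
  have hsplit : ∀ y, ((S.filter (fun s => G.Adj y s)).card : ℝ) = f y + g y := by
    intro y
    have : S.filter (fun s => G.Adj y s) =
        (S \ X).filter (fun s => G.Adj y s) ∪ X.filter (fun s => G.Adj y s) := by
      rw [← Finset.filter_union, Finset.sdiff_union_of_subset hX]
    rw [this, Finset.card_union_of_disjoint]
    · push_cast; rfl
    · exact Finset.disjoint_filter_filter (Finset.sdiff_disjoint)
  -- e(X,Y) = ∑_{y∈Y} g y
  have hexy : (((X ×ˢ Y).filter (fun p => G.Adj p.1 p.2)).card : ℝ) = ∑ y ∈ Y, g y := by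
    rw [card_prod_filter]
    have h1 : ∑ x ∈ X, (Y.filter (G.Adj x)).card
        = ∑ y ∈ Y, (X.filter (fun x => G.Adj y x)).card := by
      simp only [Finset.card_filter]
      rw [Finset.sum_comm]
      exact Finset.sum_congr rfl fun y _ => Finset.sum_congr rfl fun x _ =>
        if_congr (G.adj_comm x y) rfl rfl
    rw [h1]
    push_cast
    rfl
  -- target = ∑_{y∈Y''} f y
  have htar : ((((Y'' ×ˢ (S \ X)).filter (fun p => G.Adj p.1 p.2)).card : ℝ)) =
      ∑ y ∈ Y'', f y := by
    rw [card_prod_filter]; push_cast; rfl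
  rw [htar]
  -- ∑_{Y} f = ∑_{Y''} f + ∑_{Y\Y''} f
  have hsum : ∑ y ∈ Y, f y = ∑ y ∈ Y'', f y + ∑ y ∈ Y \ Y'', f y := by
    rw [← Finset.sum_union (Finset.disjoint_sdiff), Finset.union_sdiff_of_subset hY''sub]
  -- bound on Y \ Y''
  have hsmall : ∑ y ∈ Y \ Y'', f y ≤ (δ / 3) * (Y \ Y'').card := by
    have := Finset.sum_le_card_nsmul (Y \ Y'') f (δ / 3) ?_
    · simpa [nsmul_eq_mul, mul_comm] using this
    · intro y hy
      rw [Finset.mem_sdiff, hY'', Finset.mem_filter] at hy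
      have := hy.2
      push_neg at this
      exact le_of_lt (this hy.1)
  have hdsum : δ * Y.card ≤ ∑ y ∈ Y, (f y + g y) := by
    calc δ * Y.card = ∑ _y ∈ Y, δ := by rw [Finset.sum_const, nsmul_eq_mul]; ring
    _ ≤ ∑ y ∈ Y, (f y + g y) := by
        apply Finset.sum_le_sum
        intro y hy
        rw [← hsplit y]; exact hdeg y hy
  rw [Finset.sum_add_distrib] at hdsum
  have hcard : ((Y \ Y'').card : ℝ) ≤ (Y.card : ℝ) := by
    exact_mod_cast Finset.card_le_card (Finset.sdiff_subset)
  have hg0 : (0:ℝ) ≤ ∑ y ∈ Y, g y := Finset.sum_nonneg fun y _ => Nat.cast_nonneg _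
  nlinarith [hsparse, hexy, hsum, hsmall, hdsum, hcard, hδ.le]
end

section
/- Let G be a simple graph, let S and T be disjoint finite vertex sets, let X ⊆ S and Y ⊆ T, and let ñ, δ, m be positive reals. Suppose: (i) every u ∈ T∖Y satisfies |N_Y(N_S(u))| < ñ; (ii) every y ∈ Y satisfies d_S(y) ≤ 5δ; and (iii) every y in Y'' = {y ∈ Y : d_{S∖X}(y) ≥ δ/3} satisfies |N_T(N_S(y)∖X) ∖ Y| ≥ m. Then e(Y'', S∖X) ≤ |T∖Y| · 5δ · ñ / m. -/
open Finset

/-- Let `G` be a simple graph, `S` and `T` disjoint finite vertex sets,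
`X ⊆ S`, `Y ⊆ T`, `nh, δ, m` positive reals. Suppose:
(i) every `u ∈ T∖Y` satisfies `|N_Y(N_S(u))| < nh`;
(ii) every `y ∈ Y` satisfies `d_S(y) ≤ 5δ`; and
(iii) every `y` in `Y'' = {y ∈ Y : d_{S∖X}(y) ≥ δ/3}` satisfies
`|N_T(N_S(y)∖X) ∖ Y| ≥ m`. Then `e(Y'', S∖X) ≤ |T∖Y| · 5δ · nh / m`. -/
theorem stmt8 {V : Type*} [Fintype V] [DecidableEq V]
    (G : SimpleGraph V) [DecidableRel G.Adj]
    (S T : Finset V) (hdisj : Disjoint S T)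
    (X Y : Finset V) (hX : X ⊆ S) (hY : Y ⊆ T)
    (nh δ m : ℝ) (hnh : 0 < nh) (hδ : 0 < δ) (hm : 0 < m)
    (h₁ : ∀ u ∈ T \ Y,
      ((Y.filter (fun y => ∃ s ∈ S.filter (fun s => G.Adj u s), G.Adj s y)).card : ℝ) < nh)
    (h₂ : ∀ y ∈ Y, ((S.filter (fun s => G.Adj y s)).card : ℝ) ≤ 5 * δ)
    (h₃ : ∀ y ∈ Y.filter (fun y => δ / 3 ≤ (((S \ X).filter (fun s => G.Adj y s)).card : ℝ)),
      m ≤ (((T.filter (fun u => ∃ s ∈ (S.filter (fun s => G.Adj y s)) \ X, G.Adj s u))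
              \ Y).card : ℝ)) :
    ((((Y.filter (fun y => δ / 3 ≤ (((S \ X).filter (fun s => G.Adj y s)).card : ℝ)))
          ×ˢ (S \ X)).filter (fun p => G.Adj p.1 p.2)).card : ℝ)
      ≤ ((T \ Y).card : ℝ) * (5 * δ) * nh / m := by
  classical
  set Y'' := Y.filter (fun y => δ / 3 ≤ (((S \ X).filter (fun s => G.Adj y s)).card : ℝ))
    with hY''def
  set W := T \ Y with hWdef
  set P := (Y'' ×ˢ W).filter
      (fun p : V × V => ∃ s ∈ (S.filter (fun s => G.Adj p.1 s)) \ X, G.Adj s p.2) with hPdef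
  have hYsub : Y'' ⊆ Y := filter_subset _ _
  -- fibers over first coordinate are large
  have hfibA : ∀ y ∈ Y'', m ≤ ((P.filter (fun p => p.1 = y)).card : ℝ) := by
    intro y hy
    refine le_trans (h₃ y hy) ?_
    have hcard : ((T.filter (fun u => ∃ s ∈ (S.filter (fun s => G.Adj y s)) \ X, G.Adj s u))
        \ Y).card ≤ (P.filter (fun p => p.1 = y)).card := by
      apply Finset.card_le_card_of_injOn (fun u => (y, u))
      · intro u hu
        obtain ⟨huT, huY⟩ := Finset.mem_sdiff.mp hu
        obtain ⟨huT', hex⟩ := Finset.mem_filter.mp huT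
        refine Finset.mem_filter.mpr ⟨Finset.mem_filter.mpr ⟨?_, ?_⟩, rfl⟩
        · exact Finset.mem_product.mpr ⟨hy, Finset.mem_sdiff.mpr ⟨huT', huY⟩⟩
        · exact hex
      · intro a _ b _ hab
        exact (Prod.mk.injEq _ _ _ _).mp hab |>.2
    exact_mod_cast hcard
  have hPsum : P.card = ∑ y ∈ Y'', (P.filter (fun p => p.1 = y)).card := by
    apply Finset.card_eq_sum_card_fiberwise
    intro p hp
    exact (Finset.mem_product.mp (Finset.mem_filter.mp hp).1).1
  have hA : m * Y''.card ≤ (P.card : ℝ) := by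
    rw [hPsum]
    push_cast
    calc m * Y''.card = ∑ _y ∈ Y'', m := by rw [Finset.sum_const, nsmul_eq_mul]; ring
    _ ≤ ∑ y ∈ Y'', ((P.filter (fun p => p.1 = y)).card : ℝ) := Finset.sum_le_sum hfibA
  -- fibers over second coordinate are small
  have hfibB : ∀ u ∈ W, ((P.filter (fun p => p.2 = u)).card : ℝ) ≤ nh := by
    intro u hu
    have hle : (P.filter (fun p => p.2 = u)).card ≤
        (Y.filter (fun y => ∃ s ∈ S.filter (fun s => G.Adj u s), G.Adj s y)).card := by
      apply Finset.card_le_card_of_injOn (fun p => p.1)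
      · intro p hp
        obtain ⟨hpP, hp2⟩ := Finset.mem_filter.mp hp
        obtain ⟨hmem, s, hs, hadj⟩ := Finset.mem_filter.mp hpP
        obtain ⟨hsS, hsX⟩ := Finset.mem_sdiff.mp hs
        obtain ⟨hsS', hsy⟩ := Finset.mem_filter.mp hsS
        refine Finset.mem_filter.mpr ⟨hYsub (Finset.mem_product.mp hmem).1, ?_⟩
        exact ⟨s, Finset.mem_filter.mpr ⟨hsS', by rw [hp2] at hadj; exact hadj.symm⟩, hsy.symm⟩
      · intro a ha b hb hab
        have ha2 := (Finset.mem_filter.mp ha).2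
        have hb2 := (Finset.mem_filter.mp hb).2
        exact Prod.ext hab (ha2.trans hb2.symm)
    exact le_of_lt (lt_of_le_of_lt (by exact_mod_cast hle) (h₁ u hu))
  have hPsum2 : P.card = ∑ u ∈ W, (P.filter (fun p => p.2 = u)).card := by
    apply Finset.card_eq_sum_card_fiberwise
    intro p hp
    exact (Finset.mem_product.mp (Finset.mem_filter.mp hp).1).2
  have hB : (P.card : ℝ) ≤ W.card * nh := by
    rw [hPsum2]
    push_cast
    calc (∑ u ∈ W, ((P.filter (fun p => p.2 = u)).card : ℝ))
        ≤ ∑ _u ∈ W, nh := Finset.sum_le_sum hfibB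
      _ = W.card * nh := by rw [Finset.sum_const, nsmul_eq_mul]
  have hY''le : (Y''.card : ℝ) ≤ (W.card : ℝ) * nh / m := by
    rw [le_div_iff₀ hm]
    nlinarith [hA, hB]
  -- bound the edge count
  set E := (Y'' ×ˢ (S \ X)).filter (fun p : V × V => G.Adj p.1 p.2) with hEdef
  have hEsum : E.card = ∑ y ∈ Y'', (E.filter (fun p => p.1 = y)).card := by
    apply Finset.card_eq_sum_card_fiberwise
    intro p hp
    exact (Finset.mem_product.mp (Finset.mem_filter.mp hp).1).1
  have hfibE : ∀ y ∈ Y'', ((E.filter (fun p => p.1 = y)).card : ℝ) ≤ 5 * δ := by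
    intro y hy
    have hle : (E.filter (fun p => p.1 = y)).card ≤ (S.filter (fun s => G.Adj y s)).card := by
      apply Finset.card_le_card_of_injOn (fun p => p.2)
      · intro p hp
        obtain ⟨hpE, hp1⟩ := Finset.mem_filter.mp hp
        obtain ⟨hmem, hadj⟩ := Finset.mem_filter.mp hpE
        have hsub : p.2 ∈ S \ X := (Finset.mem_product.mp hmem).2
        refine Finset.mem_filter.mpr ⟨(Finset.mem_sdiff.mp hsub).1, by rw [hp1] at hadj; exact hadj⟩
      · intro a ha b hb hab
        have ha2 := (Finset.mem_filter.mp ha).2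
        have hb2 := (Finset.mem_filter.mp hb).2
        exact Prod.ext (ha2.trans hb2.symm) hab
    exact le_trans (by exact_mod_cast hle) (h₂ y (hYsub hy))
  have hE : (E.card : ℝ) ≤ Y''.card * (5 * δ) := by
    rw [hEsum]
    push_cast
    calc (∑ y ∈ Y'', ((E.filter (fun p => p.1 = y)).card : ℝ))
        ≤ ∑ _y ∈ Y'', (5 * δ) := Finset.sum_le_sum hfibE
      _ = Y''.card * (5 * δ) := by rw [Finset.sum_const, nsmul_eq_mul]
    
  calc (E.card : ℝ) ≤ Y''.card * (5 * δ) := hE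
    _ ≤ ((W.card : ℝ) * nh / m) * (5 * δ) := by
        apply mul_le_mul_of_nonneg_right hY''le (by positivity)
    _ = (W.card : ℝ) * (5 * δ) * nh / m := by ring
end

section
/- Let G be a simple graph, let S and T be disjoint finite vertex sets, let X ⊆ S and Y ⊆ T with Y nonempty, and let ñ, δ, m be positive reals. Suppose: (i) every y ∈ Y satisfies δ ≤ d_S(y) ≤ 5δ; (ii) e(X,Y) < δ|Y|/2; (iii) every u ∈ T∖Y satisfies |N_Y(N_S(u))| < ñ; (iv) every y in Y'' = {y ∈ Y : d_{S∖X}(y) ≥ δ/3} satisfies |N_T(N_S(y)∖X) ∖ Y| ≥ m; and (v) m ≤ |Y|. Then m ≤ √(30 · ñ · |T|). -/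
open Finset

/-- key bound `|Y_j| ≤ √(30 ñ |T_j|)`. Let `G` be a simple graph, `S` and
`T` disjoint finite vertex sets, `X ⊆ S`, `Y ⊆ T` with `Y` nonempty, and `nh, δ, m` positive
reals. Suppose:
(i) every `y ∈ Y` satisfies `δ ≤ d_S(y) ≤ 5δ`;
(ii) `e(X,Y) < δ|Y|/2`;
(iii) every `u ∈ T∖Y` satisfies `|N_Y(N_S(u))| < nh`;
(iv) every `y ∈ Y'' = {y ∈ Y : d_{S∖X}(y) ≥ δ/3}` satisfies `|N_T(N_S(y)∖X) ∖ Y| ≥ m`; and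
(v) `m ≤ |Y|`. Then `m ≤ √(30 · nh · |T|)`. -/
theorem stmt9 {V : Type*} [Fintype V] [DecidableEq V]
    (G : SimpleGraph V) [DecidableRel G.Adj]
    (S T : Finset V) (hdisj : Disjoint S T)
    (X Y : Finset V) (hX : X ⊆ S) (hY : Y ⊆ T) (hYne : Y.Nonempty)
    (nh δ m : ℝ) (hnh : 0 < nh) (hδ : 0 < δ) (hm : 0 < m)
    (h₁ : ∀ y ∈ Y, δ ≤ ((S.filter (fun s => G.Adj y s)).card : ℝ) ∧
                   ((S.filter (fun s => G.Adj y s)).card : ℝ) ≤ 5 * δ)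
    (h₂ : (((X ×ˢ Y).filter (fun p => G.Adj p.1 p.2)).card : ℝ) < δ * Y.card / 2)
    (h₃ : ∀ u ∈ T \ Y,
      ((Y.filter (fun y => ∃ s ∈ S.filter (fun s => G.Adj u s), G.Adj s y)).card : ℝ) < nh)
    (h₄ : ∀ y ∈ Y.filter (fun y => δ / 3 ≤ (((S \ X).filter (fun s => G.Adj y s)).card : ℝ)),
      m ≤ (((T.filter (fun u => ∃ s ∈ (S.filter (fun s => G.Adj y s)) \ X, G.Adj s u))
              \ Y).card : ℝ))
    (h₅ : m ≤ (Y.card : ℝ)) :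
    m ≤ Real.sqrt (30 * nh * T.card) := by
  classical
  set Y2 := Y.filter (fun y => δ / 3 ≤ (((S \ X).filter (fun s => G.Adj y s)).card : ℝ)) with hY2def
  have hY2sub : Y2 ⊆ Y := filter_subset _ _
  -- Step A : |Y| ≤ 4 |Y2|
  have hEsum : ((X ×ˢ Y).filter (fun p => G.Adj p.1 p.2)).card
      = ∑ y ∈ Y, (X.filter (fun x => G.Adj y x)).card := by
    rw [Finset.card_filter, Finset.sum_product, Finset.sum_comm]
    refine Finset.sum_congr rfl fun y _ => ?_
    rw [Finset.card_filter]
    exact Finset.sum_congr rfl fun x _ => if_congr (G.adj_comm x y) rfl rfl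
  have hsplit : ∀ y : V, (S.filter (fun s => G.Adj y s)).card
      = (X.filter (fun s => G.Adj y s)).card + ((S \ X).filter (fun s => G.Adj y s)).card := by
    intro y
    rw [← Finset.card_union_of_disjoint
        (Finset.disjoint_filter_filter Finset.disjoint_sdiff),
      ← Finset.filter_union, Finset.union_sdiff_of_subset hX]
  have hlow : ((Y \ Y2).card : ℝ) * (2 * δ / 3)
      ≤ (((X ×ˢ Y).filter (fun p => G.Adj p.1 p.2)).card : ℝ) := by
    have h1 : (((X ×ˢ Y).filter (fun p => G.Adj p.1 p.2)).card : ℝ)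
        = ∑ y ∈ Y, ((X.filter (fun x => G.Adj y x)).card : ℝ) := by
      rw [hEsum]; push_cast; ring
    rw [h1]
    have h2 : ∑ y ∈ Y \ Y2, ((X.filter (fun x => G.Adj y x)).card : ℝ)
        ≤ ∑ y ∈ Y, ((X.filter (fun x => G.Adj y x)).card : ℝ) := by
      apply Finset.sum_le_sum_of_subset_of_nonneg (Finset.sdiff_subset)
      intro i _ _; positivity
    refine le_trans ?_ h2
    calc ((Y \ Y2).card : ℝ) * (2 * δ / 3) = ∑ _y ∈ Y \ Y2, (2 * δ / 3) := by
          rw [Finset.sum_const, nsmul_eq_mul]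
      _ ≤ _ := by
          refine Finset.sum_le_sum fun y hy => ?_
          rw [Finset.mem_sdiff] at hy
          obtain ⟨hyY, hyN⟩ := hy
          have hnot : ¬ (δ / 3 ≤ (((S \ X).filter (fun s => G.Adj y s)).card : ℝ)) := by
            intro hc
            exact hyN (by rw [hY2def]; exact Finset.mem_filter.mpr ⟨hyY, hc⟩)
          push_neg at hnot
          have hd := (h₁ y hyY).1
          have hs := hsplit y
          have hs' : ((S.filter (fun s => G.Adj y s)).card : ℝ)
              = ((X.filter (fun s => G.Adj y s)).card : ℝ)
                + (((S \ X).filter (fun s => G.Adj y s)).card : ℝ) := by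
            exact_mod_cast congrArg (Nat.cast : ℕ → ℝ) hs
          linarith
  have hYle : (Y.card : ℝ) ≤ 4 * (Y2.card : ℝ) := by
    have hc : ((Y \ Y2).card : ℝ) = (Y.card : ℝ) - (Y2.card : ℝ) := by
      rw [Finset.card_sdiff_of_subset hY2sub, Nat.cast_sub (Finset.card_le_card hY2sub)]
    rw [hc] at hlow
    nlinarith [h₂, hδ, hlow]
  -- Step B : m * |Y2| ≤ nh * |T|
  set P := (Y2 ×ˢ (T \ Y)).filter
      (fun p => ∃ s ∈ (S.filter (fun s => G.Adj p.1 s)) \ X, G.Adj s p.2) with hPdef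
  have hP1 : m * (Y2.card : ℝ) ≤ (P.card : ℝ) := by
    have hsum : P.card = ∑ y ∈ Y2,
        ((T.filter (fun u => ∃ s ∈ (S.filter (fun s => G.Adj y s)) \ X, G.Adj s u)) \ Y).card := by
      rw [hPdef, Finset.card_filter, Finset.sum_product]
      refine Finset.sum_congr rfl fun y _ => ?_
      have hset : (T.filter (fun u => ∃ s ∈ (S.filter (fun s => G.Adj y s)) \ X, G.Adj s u)) \ Y
          = (T \ Y).filter (fun u => ∃ s ∈ (S.filter (fun s => G.Adj y s)) \ X, G.Adj s u) := by
        ext u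
        simp only [Finset.mem_filter, Finset.mem_sdiff]
        tauto
      rw [hset, Finset.card_filter]
      exact Finset.sum_congr rfl fun u _ => by congr
    rw [hsum]
    push_cast
    calc m * (Y2.card : ℝ) = ∑ _y ∈ Y2, m := by rw [Finset.sum_const, nsmul_eq_mul]; ring
      _ ≤ _ := Finset.sum_le_sum fun y hy => h₄ y hy
  have hP2 : (P.card : ℝ) ≤ nh * (T.card : ℝ) := by
    have hsum : P.card = ∑ u ∈ T \ Y,
        (Y2.filter (fun y => ∃ s ∈ (S.filter (fun s => G.Adj y s)) \ X, G.Adj s u)).card := by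
      rw [hPdef, Finset.card_filter, Finset.sum_product, Finset.sum_comm]
      refine Finset.sum_congr rfl fun u _ => ?_
      rw [Finset.card_filter]
      exact Finset.sum_congr rfl fun y _ => by congr
    rw [hsum]
    push_cast
    calc (∑ u ∈ T \ Y,
          ((Y2.filter (fun y => ∃ s ∈ (S.filter (fun s => G.Adj y s)) \ X, G.Adj s u)).card : ℝ))
        ≤ ∑ _u ∈ T \ Y, nh := by
          refine Finset.sum_le_sum fun u hu => ?_
          refine le_trans ?_ (h₃ u hu).le
          have hsub : (Y2.filter (fun y => ∃ s ∈ (S.filter (fun s => G.Adj y s)) \ X, G.Adj s u))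
              ⊆ Y.filter (fun y => ∃ s ∈ S.filter (fun s => G.Adj u s), G.Adj s y) := by
            intro y hy
            simp only [Finset.mem_filter, Finset.mem_sdiff] at hy ⊢
            obtain ⟨hy2, s, ⟨⟨hsS, hys⟩, _⟩, hsu⟩ := hy
            exact ⟨hY2sub hy2, s, ⟨hsS, G.adj_comm u s |>.mpr (G.adj_symm hsu).symm⟩, G.adj_symm hys⟩
          exact Nat.cast_le.mpr (Finset.card_le_card hsub)
      _ = ((T \ Y).card : ℝ) * nh := by rw [Finset.sum_const, nsmul_eq_mul]
      _ ≤ (T.card : ℝ) * nh := by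
          have := Finset.card_le_card (Finset.sdiff_subset (s := T) (t := Y))
          have : ((T \ Y).card : ℝ) ≤ (T.card : ℝ) := by exact_mod_cast this
          nlinarith [hnh]
      _ = nh * (T.card : ℝ) := by ring
  -- combine
  have hsq : m ^ 2 ≤ 30 * nh * (T.card : ℝ) := by
    nlinarith [hP1, hP2, hYle, h₅, hm, hnh,
      mul_nonneg hnh.le (Nat.cast_nonneg T.card : (0:ℝ) ≤ (T.card : ℝ))]
  calc m = Real.sqrt (m ^ 2) := (Real.sqrt_sq hm.le).symm
    _ ≤ Real.sqrt (30 * nh * T.card) := Real.sqrt_le_sqrt hsq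
end
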